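/- Let d ≥ 2 and m ≥ 1 be integers, let θ′, ε ∈ ℝ with ε ≥ 0, fix any unit vector u ∈ S^{d−1}, and set p := σ_d({z ∈ S^{d−1} : |⟨z, u⟩ − cos θ′| ≤ ε}). Let x₁, …, x_m be independent random vectors, each distributed according to σ_d. For distinct i, j with x_i ≠ x_j define N_{ij} := #{k ∈ {1,…,m} \ {i, j} : |⟨(x_i − x_j)/‖x_i − x_j‖, x_k⟩ − cos θ′| ≤ ε}. Then for every real s ≥ 2, Pr[for all distinct i, j with x_i ≠ x_j: N_{ij} ≤ (m−2)·p + s·max((m−2)·p, 1)] ≥ 1 − m²·exp(−s/2). -/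

import Mathlib

open MeasureTheory ProbabilityTheory
open scoped RealInnerProductSpace Classical ENNReal

/-- `σ` is the uniform (normalized rotation-invariant) probability measure on the unit sphere
`S^{d−1} ⊆ ℝ^d`, viewed as a measure on `ℝ^d` concentrated on the sphere. -/
def IsUniformSphereMeasure (d : ℕ) (σ : Measure (EuclideanSpace ℝ (Fin d))) : Prop :=
  IsProbabilityMeasure σ ∧ σ (Metric.sphere (0 : EuclideanSpace ℝ (Fin d)) 1) = 1 ∧
    ∀ O : EuclideanSpace ℝ (Fin d) ≃ₗᵢ[ℝ] EuclideanSpace ℝ (Fin d), Measure.map (⇑O) σ = σ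

namespace CloseDiffAux

theorem lintegral_pi_prod_fin {n : ℕ} {E : Type*} [MeasurableSpace E]
    (μ : Measure E) [SigmaFinite μ] (f : Fin n → E → ℝ≥0∞) (hf : ∀ i, Measurable (f i)) :
    ∫⁻ x : Fin n → E, ∏ i, f i (x i) ∂Measure.pi (fun _ => μ) = ∏ i, ∫⁻ z, f i z ∂μ := by
  induction n with
  | zero => simp [Measure.pi_univ]
  | succ n ih =>
    have hMP := (measurePreserving_piFinSuccAbove (fun _ : Fin (n+1) => μ) 0)
    have hmeas2 : Measurable fun b : Fin n → E => ∏ i : Fin n, f i.succ (b i) :=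
      Finset.measurable_prod _ fun i _ => (hf i.succ).comp (measurable_pi_apply i)
    have hmeas : Measurable fun z : E × (Fin n → E) =>
        f 0 z.1 * ∏ i : Fin n, f i.succ (z.2 i) :=
      ((hf 0).comp measurable_fst).mul (hmeas2.comp measurable_snd)
    have key := hMP.lintegral_comp hmeas
    have heq : ∀ x : Fin (n+1) → E,
        (fun z : E × (Fin n → E) => f 0 z.1 * ∏ i : Fin n, f i.succ (z.2 i))
          ((MeasurableEquiv.piFinSuccAbove (fun _ => E) 0) x) = ∏ i, f i (x i) := by
      intro x
      simp only [MeasurableEquiv.piFinSuccAbove_apply, Fin.prod_univ_succ]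
      rfl
    simp only [heq] at key
    rw [key, MeasureTheory.lintegral_prod_mul ((hf 0).aemeasurable) hmeas2.aemeasurable,
      ih _ (fun i => hf i.succ), Fin.prod_univ_succ]

theorem lintegral_pi_prod {ι : Type*} [Fintype ι] {E : Type*} [MeasurableSpace E]
    (μ : Measure E) [SigmaFinite μ] (f : ι → E → ℝ≥0∞) (hf : ∀ i, Measurable (f i)) :
    ∫⁻ x : ι → E, ∏ i, f i (x i) ∂Measure.pi (fun _ => μ) = ∏ i, ∫⁻ z, f i z ∂μ := by
  let e := (Fintype.equivFin ι).symm
  have hMP := measurePreserving_piCongrLeft (fun _ : ι => μ) e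
  have hmeas : Measurable fun x : ι → E => ∏ i, f i (x i) :=
    Finset.measurable_prod _ fun i _ => (hf i).comp (measurable_pi_apply i)
  rw [← hMP.lintegral_comp hmeas]
  have heq : ∀ y : Fin (Fintype.card ι) → E,
      (∏ i, f i ((MeasurableEquiv.piCongrLeft (fun _ => E) e y) i))
        = ∏ i', f (e i') (y i') := by
    intro y
    rw [← e.prod_comp]
    congr 1; ext i'
    rw [MeasurableEquiv.coe_piCongrLeft, Equiv.piCongrLeft_apply_apply]
  simp only [heq]
  rw [lintegral_pi_prod_fin μ _ (fun i' => hf (e i')), ← e.prod_comp]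

theorem cap_measure {d : ℕ} (σ : Measure (EuclideanSpace ℝ (Fin d)))
    (hσ : IsUniformSphereMeasure d σ) (c ε : ℝ)
    (u w : EuclideanSpace ℝ (Fin d)) (hu : ‖u‖ = 1) (hw : ‖w‖ = 1) :
    σ {z | |⟪w, z⟫ - c| ≤ ε} = σ {z | ‖z‖ = 1 ∧ |⟪z, u⟫ - c| ≤ ε} := by
  obtain ⟨hprob, hsph, hrot⟩ := hσ
  haveI := hprob
  -- restrict to the sphere
  have hns : σ (Metric.sphere (0 : EuclideanSpace ℝ (Fin d)) 1)ᶜ = 0 := by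
    rw [measure_compl (Metric.isClosed_sphere.measurableSet) (measure_ne_top σ _), hsph,
      measure_univ, tsub_self]
  have h1 : σ {z | |⟪w, z⟫ - c| ≤ ε} = σ {z | ‖z‖ = 1 ∧ |⟪w, z⟫ - c| ≤ ε} := by
    rw [← measure_inter_conull hns]
    congr 1
    ext z
    simp [mem_sphere_zero_iff_norm, and_comm]
  rw [h1]
  -- apply the reflection sending u to w
  set O : EuclideanSpace ℝ (Fin d) ≃ₗᵢ[ℝ] EuclideanSpace ℝ (Fin d) :=
    Submodule.reflection (ℝ ∙ (u - w))ᗮ with hO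
  have hOu : O u = w := Submodule.reflection_sub (by rw [hu, hw])
  have hOw : O w = u := by
    have := Submodule.reflection_reflection (ℝ ∙ (u - w))ᗮ u
    rw [hOu] at this
    exact this
  have hmf : Measurable fun z : EuclideanSpace ℝ (Fin d) => |⟪z, u⟫ - c| :=
    ((measurable_id.inner measurable_const).sub measurable_const).abs
  have hmeasset : MeasurableSet {z : EuclideanSpace ℝ (Fin d) | ‖z‖ = 1 ∧ |⟪z, u⟫ - c| ≤ ε} :=
    (measurableSet_eq_fun measurable_norm measurable_const).inter
      (measurableSet_le hmf measurable_const)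
  calc σ {z | ‖z‖ = 1 ∧ |⟪w, z⟫ - c| ≤ ε}
      = (Measure.map (⇑O) σ) {z | ‖z‖ = 1 ∧ |⟪z, u⟫ - c| ≤ ε} := by
        rw [Measure.map_apply O.continuous.measurable hmeasset]
        congr 1
        ext z
        simp only [Set.mem_preimage, Set.mem_setOf_eq, O.norm_map, ← hOw, O.inner_map_map]
        rw [real_inner_comm]
    _ = σ {z | ‖z‖ = 1 ∧ |⟪z, u⟫ - c| ≤ ε} := by rw [hrot]

theorem chernoff_exponent (q s : ℝ) (hq : 0 ≤ q) (hs : 2 ≤ s) :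
    q * (Real.exp 1 - 1) - (q + s * max q 1) ≤ -(s / 2) := by
  have he : Real.exp 1 < 2.7182818286 := Real.exp_one_lt_d9
  rcases le_total q 1 with h | h
  · rw [max_eq_right h]; nlinarith
  · rw [max_eq_left h]; nlinarith

theorem map_tuple_eq_pi {E Ω : Type*} [MeasurableSpace E] [MeasurableSpace Ω]
    (μ : Measure Ω) [IsProbabilityMeasure μ] {m : ℕ} (σ : Measure E) [IsProbabilityMeasure σ]
    (x : Fin m → Ω → E) (hxmeas : ∀ i, Measurable (x i))
    (hxdist : ∀ i, Measure.map (x i) μ = σ)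
    (hxindep : iIndepFun x μ) :
    Measure.map (fun ω i => x i ω) μ = Measure.pi (fun _ => σ) := by
  refine (Measure.pi_eq (μ := fun _ => σ) fun s hs => ?_).symm
  rw [Measure.map_apply (measurable_pi_lambda _ hxmeas) (MeasurableSet.univ_pi hs)]
  have hpre : (fun ω i => x i ω) ⁻¹' Set.pi Set.univ s = ⋂ i ∈ Finset.univ, x i ⁻¹' s i := by
    ext ω; simp [Set.mem_pi]
  rw [hpre, hxindep.measure_inter_preimage_eq_mul Finset.univ (fun i _ => hs i)]
  refine Finset.prod_congr rfl fun i _ => ?_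
  rw [← hxdist i, Measure.map_apply (hxmeas i) (hs i)]

theorem pair_chernoff {d m : ℕ} (σ : Measure (EuclideanSpace ℝ (Fin d)))
    (hσ : IsUniformSphereMeasure d σ) (c ε : ℝ) (hε : 0 ≤ ε)
    (u : EuclideanSpace ℝ (Fin d)) (hu : ‖u‖ = 1)
    (p : ℝ) (hp : p = (σ {z | ‖z‖ = 1 ∧ |⟪z, u⟫ - c| ≤ ε}).toReal)
    (i j : Fin m) (hij : i ≠ j) (s : ℝ) (hs : 2 ≤ s) :
    (Measure.pi fun _ : Fin m => σ)
      {y | y i ≠ y j ∧ ((m : ℝ) - 2) * p + s * max (((m : ℝ) - 2) * p) 1 <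
        ((Finset.univ.filter (fun k : Fin m => k ≠ i ∧ k ≠ j ∧
          |⟪‖y i - y j‖⁻¹ • (y i - y j), y k⟫ - c| ≤ ε)).card : ℝ)} ≤
      ENNReal.ofReal (Real.exp (-(s / 2))) := by
  haveI := hσ.1
  set π : Measure (Fin m → EuclideanSpace ℝ (Fin d)) := Measure.pi fun _ : Fin m => σ with hπ
  haveI : IsProbabilityMeasure π := by
    constructor
    rw [hπ, ← Set.pi_univ Set.univ, Measure.pi_pi]
    simp
  have hp0 : 0 ≤ p := hp ▸ ENNReal.toReal_nonneg
  have hm2 : 2 ≤ m := by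
    have h1 : (i : ℕ) ≠ (j : ℕ) := fun h => hij (Fin.ext h)
    have := i.2; have := j.2; omega
  set q' : ℝ := ((m : ℝ) - 2) * p with hq'
  have hq0 : 0 ≤ q' := mul_nonneg (by
    have : (2 : ℝ) ≤ (m : ℝ) := by exact_mod_cast hm2
    linarith) hp0
  set B : ℝ := q' + s * max q' 1 with hB
  set w : (Fin m → EuclideanSpace ℝ (Fin d)) → EuclideanSpace ℝ (Fin d) :=
    fun y => ‖y i - y j‖⁻¹ • (y i - y j) with hw
  set g : EuclideanSpace ℝ (Fin d) → EuclideanSpace ℝ (Fin d) → ℝ≥0∞ := fun v z =>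
    if |⟪v, z⟫ - c| ≤ ε then ENNReal.ofReal (Real.exp 1) else 1 with hg
  set Sf : Finset (Fin m) := Finset.univ.filter (fun k => ¬(k = i ∨ k = j)) with hSf
  set F : (Fin m → EuclideanSpace ℝ (Fin d)) → ℝ≥0∞ := fun y =>
    if y i = y j then 0 else
      ENNReal.ofReal (Real.exp (-B)) * ∏ k ∈ Sf, g (w y) (y k) with hF
  -- measurability
  have hwmeas : Measurable w :=
    (((measurable_pi_apply i).sub (measurable_pi_apply j)).norm.inv).smul
      ((measurable_pi_apply i).sub (measurable_pi_apply j))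
  have hgmeas : ∀ k : Fin m, Measurable fun y : Fin m → EuclideanSpace ℝ (Fin d) => g (w y) (y k) := by
    intro k
    apply Measurable.ite _ measurable_const measurable_const
    exact measurableSet_le
      (((hwmeas.inner (measurable_pi_apply k)).sub measurable_const).abs) measurable_const
  have hFmeas : Measurable F := by
    apply Measurable.ite
    · exact measurableSet_eq_fun (measurable_pi_apply i) (measurable_pi_apply j)
    · exact measurable_const
    · exact measurable_const.mul (Finset.measurable_prod _ fun k _ => hgmeas k)
  -- pointwise: each g-product equals exp of the count
  have hprodexp : ∀ y : Fin m → EuclideanSpace ℝ (Fin d),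
      (∏ k ∈ Sf, g (w y) (y k)) = ENNReal.ofReal (Real.exp
        ((Finset.univ.filter (fun k : Fin m => k ≠ i ∧ k ≠ j ∧
          |⟪w y, y k⟫ - c| ≤ ε)).card : ℝ)) := by
    intro y
    have step1 : (∏ k ∈ Sf, g (w y) (y k)) =
        ∏ k ∈ Sf, ENNReal.ofReal (Real.exp (if |⟪w y, y k⟫ - c| ≤ ε then 1 else 0)) := by
      refine Finset.prod_congr rfl fun k _ => ?_
      simp only [hg]
      by_cases hcond : |⟪w y, y k⟫ - c| ≤ ε
      · rw [if_pos hcond, if_pos hcond]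
      · rw [if_neg hcond, if_neg hcond, Real.exp_zero, ENNReal.ofReal_one]
    have hsets : Sf.filter (fun k => |⟪w y, y k⟫ - c| ≤ ε) =
        Finset.univ.filter (fun k : Fin m => k ≠ i ∧ k ≠ j ∧ |⟪w y, y k⟫ - c| ≤ ε) := by
      rw [hSf, Finset.filter_filter]
      ext k
      simp only [Finset.mem_filter, Finset.mem_univ, true_and, not_or, and_assoc]
    rw [step1, ← ENNReal.ofReal_prod_of_nonneg (fun k _ => (Real.exp_pos _).le),
      ← Real.exp_sum, Finset.sum_boole, hsets]
  -- the bad set is inside {1 ≤ F}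
  have hsub : {y : Fin m → EuclideanSpace ℝ (Fin d) | y i ≠ y j ∧ q' + s * max q' 1 <
      ((Finset.univ.filter (fun k : Fin m => k ≠ i ∧ k ≠ j ∧
        |⟪‖y i - y j‖⁻¹ • (y i - y j), y k⟫ - c| ≤ ε)).card : ℝ)}
      ⊆ {y | 1 ≤ F y} := by
    rintro y ⟨hne, hNB⟩
    have : F y = ENNReal.ofReal (Real.exp (-B)) * ∏ k ∈ Sf, g (w y) (y k) := by
      rw [hF]; exact if_neg hne
    rw [Set.mem_setOf_eq, this, hprodexp y, ← ENNReal.ofReal_mul (Real.exp_pos _).le,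
      ← Real.exp_add]
    rw [ENNReal.one_le_ofReal]
    apply Real.one_le_exp
    simp only [hw] at hNB ⊢
    linarith [hNB]
  -- Chernoff-Markov step
  calc π {y : Fin m → EuclideanSpace ℝ (Fin d) | y i ≠ y j ∧ q' + s * max q' 1 <
      ((Finset.univ.filter (fun k : Fin m => k ≠ i ∧ k ≠ j ∧
        |⟪‖y i - y j‖⁻¹ • (y i - y j), y k⟫ - c| ≤ ε)).card : ℝ)}
      ≤ π {y | 1 ≤ F y} := measure_mono hsub
    _ ≤ ∫⁻ y, F y ∂π := by
        have := mul_meas_ge_le_lintegral₀ hFmeas.aemeasurable (μ := π) 1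
        simpa using this
    _ ≤ ENNReal.ofReal (Real.exp (-(s / 2))) := by
        -- transfer to a product space splitting off coordinates i and j
        set pr : Fin m → Prop := fun k => k = i ∨ k = j with hpr
        set ψ := MeasurableEquiv.piEquivPiSubtypeProd
          (fun _ : Fin m => EuclideanSpace ℝ (Fin d)) pr with hψdef
        have hMP := measurePreserving_piEquivPiSubtypeProd (fun _ : Fin m => σ) pr
        haveI : IsProbabilityMeasure
            (Measure.pi fun _ : {k // pr k} => σ) := Measure.pi.instIsProbabilityMeasure _
        haveI : IsProbabilityMeasure
            (Measure.pi fun _ : {k // ¬ pr k} => σ) := Measure.pi.instIsProbabilityMeasure _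
        have key : ∫⁻ y, F y ∂π = ∫⁻ z, F (ψ.symm z)
            ∂((Measure.pi fun _ : {k // pr k} => σ).prod
              (Measure.pi fun _ : {k // ¬ pr k} => σ)) :=
          ((hMP.symm ψ).lintegral_comp hFmeas).symm
        have happ : ∀ (a : {k // pr k} → EuclideanSpace ℝ (Fin d))
            (b : {k // ¬ pr k} → EuclideanSpace ℝ (Fin d)) (k : Fin m),
            ψ.symm (a, b) k = if h : pr k then a ⟨k, h⟩ else b ⟨k, h⟩ := fun a b k => rfl
        set ii : {k // pr k} := ⟨i, Or.inl rfl⟩ with hii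
        set jj : {k // pr k} := ⟨j, Or.inr rfl⟩ with hjj
        have hpri : pr i := Or.inl rfl
        have hprj : pr j := Or.inr rfl
        set C : ℝ≥0∞ := ENNReal.ofReal (Real.exp (-B)) with hC
        set D : ℝ≥0∞ := ENNReal.ofReal
          (Real.exp (((m : ℝ) - 2) * ((Real.exp 1 - 1) * p))) with hD
        have inner_bound : ∀ a : {k // pr k} → EuclideanSpace ℝ (Fin d),
            ∫⁻ b, F (ψ.symm (a, b)) ∂(Measure.pi fun _ : {k // ¬ pr k} => σ) ≤ C * D := by
          intro a
          by_cases haij : a ii = a jj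
          · have h0 : ∀ b, F (ψ.symm (a, b)) = 0 := by
              intro b
              rw [hF]
              simp only
              rw [if_pos]
              show ψ.symm (a, b) i = ψ.symm (a, b) j
              rw [happ, happ, dif_pos hpri, dif_pos hprj]
              exact haij
            simp only [h0, lintegral_zero]
            exact zero_le
          · set v : EuclideanSpace ℝ (Fin d) := ‖a ii - a jj‖⁻¹ • (a ii - a jj) with hv
            have hvnorm : ‖v‖ = 1 := by
              rw [hv, norm_smul, norm_inv, norm_norm,
                inv_mul_cancel₀ (norm_ne_zero_iff.mpr (sub_ne_zero.mpr haij))]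
            have hgvmeas : Measurable (g v) := by
              apply Measurable.ite _ measurable_const measurable_const
              exact measurableSet_le
                (((measurable_const.inner measurable_id).sub measurable_const).abs)
                measurable_const
            have hFb : ∀ b, F (ψ.symm (a, b)) =
                C * ∏ k' : {k // ¬ pr k}, g v (b k') := by
              intro b
              have hpsi : ψ.symm (a, b) i = a ii := by rw [happ, dif_pos hpri]
              have hpsj : ψ.symm (a, b) j = a jj := by rw [happ, dif_pos hprj]
              have hwv : w (ψ.symm (a, b)) = v := by
                simp only [hw, hpsi, hpsj, hv]
              rw [hF]
              simp only
              rw [if_neg (by rw [hpsi, hpsj]; exact haij), hwv, hC]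
              congr 1
              rw [hSf]
              rw [Finset.prod_subtype (p := fun k => ¬ pr k)
                (Finset.univ.filter fun k => ¬ pr k)
                (fun k => by simp) (fun k => g v (ψ.symm (a, b) k))]
              refine Finset.prod_congr rfl fun k' _ => ?_
              rw [happ, dif_neg k'.2]
            calc ∫⁻ b, F (ψ.symm (a, b)) ∂(Measure.pi fun _ : {k // ¬ pr k} => σ)
                = C * ∫⁻ b, ∏ k' : {k // ¬ pr k}, g v (b k')
                    ∂(Measure.pi fun _ : {k // ¬ pr k} => σ) := by
                  have hGmeas : Measurable fun b : {k // ¬ pr k} → EuclideanSpace ℝ (Fin d) =>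
                      ∏ k' : {k // ¬ pr k}, g v (b k') :=
                    Finset.measurable_prod _ fun k' _ =>
                      (hgvmeas.comp (measurable_pi_apply k') :
                        Measurable fun b : {k // ¬ pr k} → EuclideanSpace ℝ (Fin d) => g v (b k'))
                  rw [lintegral_congr hFb, lintegral_const_mul _ hGmeas]
              _ = C * (∫⁻ z, g v z ∂σ) ^ Fintype.card {k // ¬ pr k} := by
                  rw [lintegral_pi_prod σ (fun _ => g v) (fun _ => hgvmeas),
                    Finset.prod_const, Finset.card_univ]
              _ ≤ C * D := by
                  gcongr
                  -- the single-coordinate integral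
                  have hA : MeasurableSet {z : EuclideanSpace ℝ (Fin d) |
                      |⟪v, z⟫ - c| ≤ ε} := measurableSet_le
                    (((measurable_const.inner measurable_id).sub measurable_const).abs)
                    measurable_const
                  have hgv : (fun z => g v z) = fun z => 1 +
                      Set.indicator {z : EuclideanSpace ℝ (Fin d) | |⟪v, z⟫ - c| ≤ ε}
                        (fun _ => ENNReal.ofReal (Real.exp 1 - 1)) z := by
                    ext z
                    by_cases hcz : |⟪v, z⟫ - c| ≤ ε
                    · simp only [hg, if_pos hcz]
                      rw [Set.indicator_of_mem
                        (show z ∈ {z : EuclideanSpace ℝ (Fin d) | |⟪v, z⟫ - c| ≤ ε} from hcz)]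
                      have h1 : (1 : ℝ≥0∞) = ENNReal.ofReal 1 := ENNReal.ofReal_one.symm
                      rw [h1, ← ENNReal.ofReal_add one_pos.le
                        (by have := Real.add_one_le_exp (1 : ℝ); linarith)]
                      norm_num
                    · simp only [hg, if_neg hcz]
                      rw [Set.indicator_of_notMem
                        (show z ∉ {z : EuclideanSpace ℝ (Fin d) | |⟪v, z⟫ - c| ≤ ε} from hcz),
                        add_zero]
                  have hsig : σ {z : EuclideanSpace ℝ (Fin d) | |⟪v, z⟫ - c| ≤ ε}
                      = ENNReal.ofReal p := by
                    rw [cap_measure σ hσ c ε u v hu hvnorm, hp,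
                      ENNReal.ofReal_toReal (measure_ne_top σ _)]
                  have hint : ∫⁻ z, g v z ∂σ = 1 + ENNReal.ofReal ((Real.exp 1 - 1) * p) := by
                    rw [hgv, lintegral_add_left measurable_const, lintegral_one, measure_univ,
                      lintegral_indicator_const hA, hsig,
                      ← ENNReal.ofReal_mul (by have := Real.add_one_le_exp (1:ℝ); linarith)]
                  have hle : ∫⁻ z, g v z ∂σ ≤ ENNReal.ofReal (Real.exp ((Real.exp 1 - 1) * p)) := by
                    rw [hint, ← ENNReal.ofReal_one,
                      ← ENNReal.ofReal_add one_pos.le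
                        (mul_nonneg (by have := Real.add_one_le_exp (1:ℝ); linarith) hp0)]
                    apply ENNReal.ofReal_le_ofReal
                    have := Real.add_one_le_exp ((Real.exp 1 - 1) * p)
                    linarith
                  have hcard : Fintype.card {k // ¬ pr k} = m - 2 := by
                    rw [Fintype.card_subtype]
                    have : Finset.univ.filter (fun k => ¬ pr k) =
                        ({i, j} : Finset (Fin m))ᶜ := by
                      ext k
                      simp [hpr]
                    rw [this, Finset.card_compl, Finset.card_insert_of_notMem
                      (by simp [hij]), Finset.card_singleton, Fintype.card_fin]
                  calc (∫⁻ z, g v z ∂σ) ^ Fintype.card {k // ¬ pr k}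
                      ≤ ENNReal.ofReal (Real.exp ((Real.exp 1 - 1) * p))
                          ^ Fintype.card {k // ¬ pr k} := by gcongr
                    _ = D := by
                        rw [← ENNReal.ofReal_pow (Real.exp_pos _).le, hD,
                          ← Real.exp_nat_mul, hcard]
                        congr 2
                        rw [Nat.cast_sub hm2]
                        push_cast
                        ring
        calc ∫⁻ y, F y ∂π
            = ∫⁻ a, ∫⁻ b, F (ψ.symm (a, b)) ∂(Measure.pi fun _ : {k // ¬ pr k} => σ)
                ∂(Measure.pi fun _ : {k // pr k} => σ) := by
              rw [key, lintegral_prod (fun z => F (ψ.symm z))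
                ((hFmeas.comp ψ.symm.measurable).aemeasurable)]
          _ ≤ ∫⁻ _, C * D ∂(Measure.pi fun _ : {k // pr k} => σ) :=
              lintegral_mono inner_bound
          _ = C * D := by rw [lintegral_const, measure_univ, mul_one]
          _ ≤ ENNReal.ofReal (Real.exp (-(s / 2))) := by
              rw [hC, hD, ← ENNReal.ofReal_mul (Real.exp_pos _).le, ← Real.exp_add]
              apply ENNReal.ofReal_le_ofReal
              apply Real.exp_le_exp.mpr
              have hch := chernoff_exponent q' s hq0 hs
              have : -B + ((m : ℝ) - 2) * ((Real.exp 1 - 1) * p)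
                  = q' * (Real.exp 1 - 1) - B := by rw [hq']; ring
              rw [this, hB]
              exact hch


end CloseDiffAux

/-- For `m` i.i.d. uniform samples from `S^{d−1}` (`d ≥ 2`), with probability at least
`1 − m²·exp(−s/2)`, for all distinct `i, j` with `x_i ≠ x_j` the number `N_{ij}` of samples
`x_k` (`k ∉ {i,j}`) in the approximate cap around `(x_i − x_j)/‖x_i − x_j‖` satisfies
`N_{ij} ≤ (m−2)p + s·max((m−2)p, 1)`. -/
theorem close_to_difference_count {d m : ℕ} (hd : 2 ≤ d) (hm : 1 ≤ m)
    (σ : Measure (EuclideanSpace ℝ (Fin d))) (hσ : IsUniformSphereMeasure d σ)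
    (θ' ε : ℝ) (hε : 0 ≤ ε)
    (u : EuclideanSpace ℝ (Fin d)) (hu : ‖u‖ = 1)
    (p : ℝ) (hp : p = (σ {z | ‖z‖ = 1 ∧ |⟪z, u⟫ - Real.cos θ'| ≤ ε}).toReal)
    {Ω : Type*} [MeasurableSpace Ω] (μ : Measure Ω) [IsProbabilityMeasure μ]
    (x : Fin m → Ω → EuclideanSpace ℝ (Fin d))
    (hxmeas : ∀ i, Measurable (x i))
    (hxdist : ∀ i, Measure.map (x i) μ = σ)
    (hxindep : iIndepFun x μ)
    (s : ℝ) (hs : 2 ≤ s) :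
    1 - (m : ℝ) ^ 2 * Real.exp (-(s / 2)) ≤
      (μ {ω | ∀ i j : Fin m, i ≠ j → x i ω ≠ x j ω →
        ((Finset.univ.filter (fun k : Fin m => k ≠ i ∧ k ≠ j ∧
            |⟪‖x i ω - x j ω‖⁻¹ • (x i ω - x j ω), x k ω⟫ - Real.cos θ'| ≤ ε)).card : ℝ)
          ≤ ((m : ℝ) - 2) * p + s * max (((m : ℝ) - 2) * p) 1}).toReal := by
  haveI := hσ.1
  set c := Real.cos θ' with hc
  set T : Ω → (Fin m → EuclideanSpace ℝ (Fin d)) := fun ω i => x i ω with hT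
  have hTmeas : Measurable T := measurable_pi_lambda _ hxmeas
  have hTmap : Measure.map T μ = Measure.pi (fun _ : Fin m => σ) :=
    CloseDiffAux.map_tuple_eq_pi μ σ x hxmeas hxdist hxindep
  set Good : Set Ω := {ω | ∀ i j : Fin m, i ≠ j → x i ω ≠ x j ω →
      ((Finset.univ.filter (fun k : Fin m => k ≠ i ∧ k ≠ j ∧
          |⟪‖x i ω - x j ω‖⁻¹ • (x i ω - x j ω), x k ω⟫ - c| ≤ ε)).card : ℝ)
        ≤ ((m : ℝ) - 2) * p + s * max (((m : ℝ) - 2) * p) 1} with hGood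
  set bad : Fin m → Fin m → Set (Fin m → EuclideanSpace ℝ (Fin d)) := fun i j =>
    {y | y i ≠ y j ∧ ((m : ℝ) - 2) * p + s * max (((m : ℝ) - 2) * p) 1 <
      ((Finset.univ.filter (fun k : Fin m => k ≠ i ∧ k ≠ j ∧
        |⟪‖y i - y j‖⁻¹ • (y i - y j), y k⟫ - c| ≤ ε)).card : ℝ)} with hbad
  have hcover : Goodᶜ ⊆ ⋃ i : Fin m, ⋃ j : Fin m, T ⁻¹' bad i j := by
    intro ω hω
    rw [hGood, Set.mem_compl_iff, Set.mem_setOf_eq] at hω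
    push_neg at hω
    obtain ⟨i, j, hij, hne, hlt⟩ := hω
    refine Set.mem_iUnion.mpr ⟨i, Set.mem_iUnion.mpr ⟨j, ?_⟩⟩
    exact ⟨hne, hlt⟩
  have hbadbound : ∀ i j : Fin m, μ (T ⁻¹' bad i j) ≤ ENNReal.ofReal (Real.exp (-(s / 2))) := by
    intro i j
    rcases eq_or_ne i j with rfl | hij
    · have : bad i i = ∅ := by
        rw [hbad]
        ext y
        simp
      rw [this, Set.preimage_empty, measure_empty]
      exact zero_le
    · calc μ (T ⁻¹' bad i j) ≤ (Measure.map T μ) (bad i j) :=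
          Measure.le_map_apply hTmeas.aemeasurable _
        _ = (Measure.pi fun _ : Fin m => σ) (bad i j) := by rw [hTmap]
        _ ≤ ENNReal.ofReal (Real.exp (-(s / 2))) :=
          CloseDiffAux.pair_chernoff σ hσ c ε hε u hu p hp i j hij s hs
  set X : ℝ≥0∞ := (m : ℝ≥0∞) * ((m : ℝ≥0∞) * ENNReal.ofReal (Real.exp (-(s / 2)))) with hX
  have hXne : X ≠ ∞ := by
    rw [hX]
    exact ENNReal.mul_ne_top (ENNReal.natCast_ne_top m)
      (ENNReal.mul_ne_top (ENNReal.natCast_ne_top m) ENNReal.ofReal_ne_top)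
  have hbadsum : μ Goodᶜ ≤ X := by
    refine le_trans (measure_mono hcover) (le_trans (measure_iUnion_le _) ?_)
    rw [tsum_fintype]
    calc ∑ i : Fin m, μ (⋃ j : Fin m, T ⁻¹' bad i j)
        ≤ ∑ _i : Fin m, ((m : ℝ≥0∞) * ENNReal.ofReal (Real.exp (-(s / 2)))) := by
          refine Finset.sum_le_sum fun i _ => ?_
          refine le_trans (measure_iUnion_le _) ?_
          rw [tsum_fintype]
          calc ∑ j : Fin m, μ (T ⁻¹' bad i j)
              ≤ ∑ _j : Fin m, ENNReal.ofReal (Real.exp (-(s / 2))) :=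
                Finset.sum_le_sum fun j _ => hbadbound i j
            _ = (m : ℝ≥0∞) * ENNReal.ofReal (Real.exp (-(s / 2))) := by
                rw [Finset.sum_const, Finset.card_univ, Fintype.card_fin, nsmul_eq_mul]
      _ = X := by
          rw [Finset.sum_const, Finset.card_univ, Fintype.card_fin, nsmul_eq_mul, hX]
  have h1 : (1 : ℝ≥0∞) ≤ μ Good + μ Goodᶜ := by
    rw [← measure_univ (μ := μ), ← Set.union_compl_self Good]
    exact measure_union_le _ _
  have hfinal : 1 - X ≤ μ Good := by
    rw [tsub_le_iff_right]
    exact h1.trans (add_le_add_right hbadsum _)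
  have hXtoReal : X.toReal = (m : ℝ) * ((m : ℝ) * Real.exp (-(s / 2))) := by
    rw [hX, ENNReal.toReal_mul, ENNReal.toReal_mul, ENNReal.toReal_natCast,
      ENNReal.toReal_ofReal (Real.exp_pos _).le]
  calc (1 : ℝ) - (m : ℝ) ^ 2 * Real.exp (-(s / 2))
      = (1 : ℝ≥0∞).toReal - X.toReal := by rw [ENNReal.toReal_one, hXtoReal]; ring
    _ ≤ ((1 : ℝ≥0∞) - X).toReal := ENNReal.le_toReal_sub hXne
    _ ≤ (μ Good).toReal := ENNReal.toReal_mono (measure_ne_top μ _) hfinal
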